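/- Let m, u, v be rational numbers with u ≠ 0, m ≠ 1, m ≠ −1, satisfying v^2 = φ(u), where φ(u) = (m^6 − 26m^4 − 31m^2 − 8)(m+1)^2·u^4 − 4m(m+1)(m^2+3)(m^4 − 6m^2 − 3)·u^3 + 2(m−1)(m+1)(3m^6 + 28m^4 + 31m^2 + 2)·u^2 − 4m(m−1)(m^2+3)(m^4 + 6m^2 + 1)·u + m^2(m+1)^2(m−1)^4. Define U = [6(m−1)(m+1)(3m^6 + 28m^4 + 31m^2 + 2)·u^2 − 36m(m−1)(m^2+3)(m^4 + 6m^2 + 1)·u + 18m(m+1)(m−1)^2·v + 18m^2(m+1)^2(m−1)^4] / u^2 and V = −108m·[m(m^2+3)(m^4 − 6m^2 − 3)(m−1)^2(m+1)^2·u^3 − (3m^6 + 28m^4 + 31m^2 + 2)(m+1)^2(m−1)^3·u^2 + (m−1)(m^2+3)(m^4 + 6m^2 + 1)·u·v + 3m(m+1)(m^2+3)(m^4 + 6m^2 + 1)(m−1)^3·u − m(m+1)^2(m−1)^4·v − m^2(m+1)^3(m−1)^6] / u^3. Then V^2 = U^3 − 432(m−1)(m+1)(325m^10 + 955m^8 +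 1266m^6 + 470m^4 + 57m^2 − 1)·U − 3456(5m^4 + 2m^2 + 1)(875m^10 + 2885m^8 + 3822m^6 + 1450m^4 + 183m^2 + 1)(m−1)^2(m+1)^2. -/

import Mathlib

set_option maxRecDepth 8000
set_option maxHeartbeats 2000000

theorem aux_19 (p q a b u : ℚ) (hu : u ≠ 0)
    (key : q ^ 2 = p ^ 3 - a * p * u ^ 4 - b * u ^ 6) :
    (q / u ^ 3) ^ 2 = (p / u ^ 2) ^ 3 - a * (p / u ^ 2) - b := by
  field_simp
  linear_combination key

theorem stmt_19 (m u v U V : ℚ) (hu : u ≠ 0) (hm1 : m ≠ 1) (hm2 : m ≠ -1)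
    (hv : v ^ 2 =
      (m ^ 6 - 26 * m ^ 4 - 31 * m ^ 2 - 8) * (m + 1) ^ 2 * u ^ 4 -
        4 * m * (m + 1) * (m ^ 2 + 3) * (m ^ 4 - 6 * m ^ 2 - 3) * u ^ 3 +
        2 * (m - 1) * (m + 1) * (3 * m ^ 6 + 28 * m ^ 4 + 31 * m ^ 2 + 2) * u ^ 2 -
        4 * m * (m - 1) * (m ^ 2 + 3) * (m ^ 4 + 6 * m ^ 2 + 1) * u +
        m ^ 2 * (m + 1) ^ 2 * (m - 1) ^ 4)
    (hU : U =
      (6 * (m - 1) * (m + 1) * (3 * m ^ 6 + 28 * m ^ 4 + 31 * m ^ 2 + 2) * u ^ 2 -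
        36 * m * (m - 1) * (m ^ 2 + 3) * (m ^ 4 + 6 * m ^ 2 + 1) * u +
        18 * m * (m + 1) * (m - 1) ^ 2 * v +
        18 * m ^ 2 * (m + 1) ^ 2 * (m - 1) ^ 4) / u ^ 2)
    (hV : V = -108 * m *
      (m * (m ^ 2 + 3) * (m ^ 4 - 6 * m ^ 2 - 3) * (m - 1) ^ 2 * (m + 1) ^ 2 * u ^ 3 -
        (3 * m ^ 6 + 28 * m ^ 4 + 31 * m ^ 2 + 2) * (m + 1) ^ 2 * (m - 1) ^ 3 * u ^ 2 +
        (m - 1) * (m ^ 2 + 3) * (m ^ 4 + 6 * m ^ 2 + 1) * u * v +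
        3 * m * (m + 1) * (m ^ 2 + 3) * (m ^ 4 + 6 * m ^ 2 + 1) * (m - 1) ^ 3 * u -
        m * (m + 1) ^ 2 * (m - 1) ^ 4 * v -
        m ^ 2 * (m + 1) ^ 3 * (m - 1) ^ 6) / u ^ 3) :
    V ^ 2 = U ^ 3 -
      432 * (m - 1) * (m + 1) *
        (325 * m ^ 10 + 955 * m ^ 8 + 1266 * m ^ 6 + 470 * m ^ 4 +
          57 * m ^ 2 - 1) * U -
      3456 * (5 * m ^ 4 + 2 * m ^ 2 + 1) *
        (875 * m ^ 10 + 2885 * m ^ 8 + 3822 * m ^ 6 + 1450 * m ^ 4 +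
          183 * m ^ 2 + 1) * (m - 1) ^ 2 * (m + 1) ^ 2 := by
  subst hU hV
  exact aux_19 _ _ _ _ u hu (by linear_combination (((-5832)*m^12 + (17496)*m^11 + (-46656)*m^9 + (34992)*m^8 + (34992)*m^7 + (-46656)*m^6 + (17496)*m^4 + (-5832)*m^3)*v + ((-5832)*m^16*u^2 + (11664)*m^16*u + (-5832)*m^16 + (11664)*m^15*u^2 + (-34992)*m^15*u + (23328)*m^15 + (93312)*m^14*u^2 + (116640)*m^14*u + (-11664)*m^14 + (-198288)*m^13*u^2 + (-256608)*m^13*u + (-69984)*m^13 + (1743768)*m^12*u^2 + (268272)*m^12*u + (99144)*m^12 + (-3289248)*m^11*u^2 + (-151632)*m^11*u + (46656)*m^11 + (5762016)*m^10*u^2 + (-233280)*m^10*u + (-163296)*m^10 + (-8234784)*m^9*u^2 + (886464)*m^9*u + (46656)*m^9 + (8613864)*m^8*u^2 + (-758160)*m^8*u + (99144)*m^8 + (-8992944)*m^7*u^2 + (-151632)*m^7*u + (-69984)*m^7 + (5971968)*m^6*u^2 + (489888)*m^6*u + (-11664)*m^6 + (-2950992)*m^5*u^2 + (-256608)*m^5*u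 + (23328)*m^5 + (1592136)*m^4*u^2 + (104976)*m^4*u + (-5832)*m^4 + (-233280)*m^3*u^2 + (-34992)*m^3*u + (116640)*m^2*u^2)) * hv)
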